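/- Let m, n ≥ 2 be integers, and let a_0(X), ..., a_{m-1}(X), b_0(X), ..., b_{n-1}(X) ∈ ℚ[X] with a_0 ≠ 0 and deg a_i ≤ 2n - 1 for all 0 ≤ i ≤ m-1. Set f(X,Y) = a_0 + a_1 Y + ... + a_{m-1} Y^{m-1} + (X^n + 5X + 5)² Y^m and g(X,Y) = b_0 + b_1 Y + ... + b_{n-1} Y^{n-1} + Y^n. Then the polynomial f(X, g(X,Y)) has at most two irreducible factors over ℚ(X), counted with multiplicity. -/

import Mathlib

open Polynomial

/-- Ω(p): number of irreducible factors of `p`, counted with multiplicity. -/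
noncomputable def Omega {R : Type*} [CommMonoidWithZero R] [IsCancelMulZero R]
    [UniqueFactorizationMonoid R] (p : R) : ℕ :=
  Multiset.card (UniqueFactorizationMonoid.factors p)

lemma Omega_eq_card {α : Type*} [CommMonoidWithZero α] [IsCancelMulZero α] [UniqueFactorizationMonoid α]
    {x : α} (hx : x ≠ 0) {M : Multiset α} (hirr : ∀ q ∈ M, Irreducible q)
    (hassoc : Associated M.prod x) : Omega x = Multiset.card M := by
  have h1 := UniqueFactorizationMonoid.factors_prod hx
  have h2 := UniqueFactorizationMonoid.factors_unique
    (fun q hq => UniqueFactorizationMonoid.irreducible_of_factor q hq) hirr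
    (h1.trans hassoc.symm)
  exact Multiset.card_eq_card_of_rel h2

lemma multiset_prod_isUnit {α : Type*} [CommMonoid α] {M : Multiset α}
    (h : ∀ q ∈ M, IsUnit q) : IsUnit M.prod := by
  induction M using Multiset.induction_on with
  | empty => simp
  | cons a s ih =>
    rw [Multiset.prod_cons]
    exact (h a (Multiset.mem_cons_self a s)).mul
      (ih fun q hq => h q (Multiset.mem_cons_of_mem hq))

lemma pow_card_dvd_prod {α : Type*} [CommMonoid α] {p : α} {M : Multiset α}
    (h : ∀ q ∈ M, p ∣ q) : p ^ Multiset.card M ∣ M.prod := by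
  induction M using Multiset.induction_on with
  | empty => simp
  | cons a s ih =>
    rw [Multiset.prod_cons, Multiset.card_cons, pow_succ, mul_comm]
    exact mul_dvd_mul (h a (Multiset.mem_cons_self a s))
      (ih fun q hq => h q (Multiset.mem_cons_of_mem hq))

lemma exists_good_factor (h : Polynomial (Polynomial ℚ)) (p : Polynomial ℚ)
    (hp : Prime p) (hh0 : h ≠ 0) (hlead : h.leadingCoeff = p ^ 2)
    (hΩ : 3 ≤ Omega (h.map (algebraMap (Polynomial ℚ) (RatFunc ℚ)))) :
    ∃ P : Polynomial (Polynomial ℚ), P.Monic ∧ Irreducible P ∧ P ∣ h := by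
  classical
  set Ψ := Polynomial.mapRingHom (algebraMap (Polynomial ℚ) (RatFunc ℚ)) with hΨ
  set F := UniqueFactorizationMonoid.factors h with hF
  have hFprod : Associated F.prod h := UniqueFactorizationMonoid.factors_prod hh0
  set F₁ := F.filter (fun q => q.natDegree ≠ 0) with hF₁
  have hsplit : F₁ + F.filter (fun q => ¬ q.natDegree ≠ 0) = F := Multiset.filter_add_not _ F
  have hFirr : ∀ q ∈ F, Irreducible q :=
    fun q hq => UniqueFactorizationMonoid.irreducible_of_factor q hq
  -- elements of F₁ map to irreducibles
  have hF₁irr : ∀ q ∈ F₁, Irreducible (Ψ q) := by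
    intro q hq
    have hqF : q ∈ F := Multiset.mem_of_mem_filter hq
    have hqd : q.natDegree ≠ 0 := (Multiset.mem_filter.mp hq).2
    have hqirr := hFirr q hqF
    have hqprim : q.IsPrimitive := by
      intro r hr
      obtain ⟨w, hw⟩ := hr
      rcases hqirr.isUnit_or_isUnit hw with h1 | h1
      · exact isUnit_C.mp h1
      · exfalso
        apply hqd
        have hr0 : r ≠ 0 := by
          rintro rfl
          exact hqirr.ne_zero (by simpa using hw)
        have hw0 : w ≠ 0 := fun h0 => hqirr.ne_zero (by rw [hw, h0, mul_zero])
        rw [hw, natDegree_mul (by simpa using hr0) hw0, natDegree_C,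
          natDegree_eq_zero_of_isUnit h1]
    exact hqprim.irreducible_iff_irreducible_map_fraction_map.mp hqirr
  -- elements of the complement map to units
  have hF₀unit : ∀ q ∈ F.filter (fun q => ¬ q.natDegree ≠ 0), IsUnit (Ψ q) := by
    intro q hq
    have hqF : q ∈ F := Multiset.mem_of_mem_filter hq
    have hqd : q.natDegree = 0 := by
      have := (Multiset.mem_filter.mp hq).2; tauto
    have hc := eq_C_of_natDegree_eq_zero hqd
    have hc0 : q.coeff 0 ≠ 0 := by
      intro h0
      exact (hFirr q hqF).ne_zero (by rw [hc, h0, map_zero])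
    rw [hΨ, coe_mapRingHom, hc, map_C]
    exact isUnit_C.mpr
      ((map_ne_zero_iff _ (IsFractionRing.injective (Polynomial ℚ) (RatFunc ℚ))).mpr hc0).isUnit
  -- count
  have hmapne : h.map (algebraMap (Polynomial ℚ) (RatFunc ℚ)) ≠ 0 :=
    (Polynomial.map_ne_zero_iff (IsFractionRing.injective (Polynomial ℚ) (RatFunc ℚ))).mpr hh0
  have hassoc : Associated ((F₁.map Ψ).prod) (h.map (algebraMap (Polynomial ℚ) (RatFunc ℚ))) := by
    have h1 : Associated (Ψ F.prod) (Ψ h) := hFprod.map Ψ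
    have h2 : Ψ F.prod = (F.map Ψ).prod := by
      rw [← Multiset.prod_hom]
    have h3 : (F.map Ψ).prod = (F₁.map Ψ).prod
        * ((F.filter (fun q => ¬ q.natDegree ≠ 0)).map Ψ).prod := by
      rw [← Multiset.prod_add, ← Multiset.map_add, hsplit]
    have h4 : IsUnit ((F.filter (fun q => ¬ q.natDegree ≠ 0)).map Ψ).prod :=
      multiset_prod_isUnit (by
        intro x hx
        obtain ⟨q, hq, rfl⟩ := Multiset.mem_map.mp hx
        exact hF₀unit q hq)
    have h6 : Associated ((F₁.map Ψ).prod) (Ψ F.prod) := by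
      rw [h2, h3]
      exact associated_mul_unit_right _ _ h4
    exact h6.trans h1
  have hcard : 3 ≤ Multiset.card F₁ := by
    have h12 : Omega (h.map (algebraMap (Polynomial ℚ) (RatFunc ℚ))) = Multiset.card F₁ := by
      rw [Omega_eq_card hmapne (fun q hq => by
        obtain ⟨q', hq', rfl⟩ := Multiset.mem_map.mp hq
        exact hF₁irr q' hq') hassoc, Multiset.card_map]
    rwa [h12] at hΩ
  -- leading coefficients
  obtain ⟨v, hv⟩ := hFprod
  obtain ⟨cv, hcvu, hcv⟩ := Polynomial.isUnit_iff.mp v.isUnit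
  have hleadprod : (F.map (fun q => q.leadingCoeff)).prod * cv = p ^ 2 := by
    have := congrArg Polynomial.leadingCoeff hv
    rw [leadingCoeff_mul, leadingCoeff_multiset_prod, ← hcv, leadingCoeff_C, hlead] at this
    exact this
  have hprodeq : (F.map (fun q => q.leadingCoeff)).prod = p ^ 2 * ↑(hcvu.unit)⁻¹ := by
    rw [Units.eq_mul_inv_iff_mul_eq, IsUnit.unit_spec]
    exact hleadprod
  -- find q₀ in F₁ whose leading coeff is not divisible by p
  have hq₀ : ∃ q₀ ∈ F₁, ¬ p ∣ q₀.leadingCoeff := by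
    by_contra hcon
    push_neg at hcon
    have h6 : p ^ 3 ∣ (F₁.map (fun q => q.leadingCoeff)).prod := by
      have hcard2 : 3 ≤ Multiset.card (F₁.map (fun q => q.leadingCoeff)) := by
        rwa [Multiset.card_map]
      refine dvd_trans (pow_dvd_pow p hcard2) ?_
      exact pow_card_dvd_prod (by
        intro x hx
        obtain ⟨q, hq, rfl⟩ := Multiset.mem_map.mp hx
        exact hcon q hq)
    have h7 : (F₁.map (fun q => q.leadingCoeff)).prod ∣ (F.map (fun q => q.leadingCoeff)).prod :=
      Multiset.prod_dvd_prod_of_le (Multiset.map_le_map (hF₁ ▸ Multiset.filter_le _ F))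
    have h8 : p ^ 3 ∣ p ^ 2 * ↑(hcvu.unit)⁻¹ := hprodeq ▸ (h6.trans h7)
    have h9 : p ∣ ↑(hcvu.unit)⁻¹ := by
      have h10 : (p : Polynomial ℚ) ^ 2 * p ∣ p ^ 2 * ↑(hcvu.unit)⁻¹ := by
        rw [← pow_succ]; exact h8
      exact (mul_dvd_mul_iff_left (pow_ne_zero 2 hp.ne_zero)).mp h10
    exact hp.not_unit (isUnit_of_dvd_unit h9 (Units.isUnit _))
  obtain ⟨q₀, hq₀F₁, hq₀p⟩ := hq₀
  have hq₀F : q₀ ∈ F := Multiset.mem_of_mem_filter hq₀F₁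
  have hq₀irr := hFirr q₀ hq₀F
  -- leading coeff of q₀ divides p^2
  have hq₀dvd : q₀.leadingCoeff ∣ p ^ 2 := by
    have h11 : q₀.leadingCoeff ∣ (F.map (fun q => q.leadingCoeff)).prod :=
      Multiset.dvd_prod (Multiset.mem_map_of_mem _ hq₀F)
    rw [hprodeq] at h11
    exact (Units.dvd_mul_right).mp h11
  have hq₀unit : IsUnit q₀.leadingCoeff := by
    obtain ⟨i, hi2, hass⟩ := (dvd_prime_pow hp 2).mp hq₀dvd
    rcases Nat.eq_zero_or_pos i with hi0 | hipos
    · rw [hi0, pow_zero] at hass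
      exact associated_one_iff_isUnit.mp hass
    · exfalso
      apply hq₀p
      exact (dvd_pow_self p (Nat.pos_iff_ne_zero.mp hipos)).trans hass.symm.dvd
  -- normalize q₀ to a monic polynomial
  obtain ⟨w, hw⟩ := hq₀unit
  have hassoc2 : Associated q₀ (C ((w⁻¹ : (Polynomial ℚ)ˣ) : Polynomial ℚ) * q₀) := by
    refine ⟨Units.map (C : Polynomial ℚ →+* Polynomial (Polynomial ℚ)).toMonoidHom w⁻¹, ?_⟩
    rw [mul_comm]
    simp
  refine ⟨C ((w⁻¹ : (Polynomial ℚ)ˣ) : Polynomial ℚ) * q₀, ?_, ?_, ?_⟩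
  · unfold Polynomial.Monic
    rw [leadingCoeff_mul, leadingCoeff_C, ← hw]
    simp
  · exact hassoc2.irreducible hq₀irr
  · have hdvd1 : q₀ ∣ h := (Multiset.dvd_prod hq₀F).trans (Dvd.intro _ hv)
    exact hassoc2.symm.dvd.trans hdvd1


noncomputable def phi0 (m : ℕ) : Polynomial ℚ →+* Polynomial (Polynomial ℚ) :=
  eval₂RingHom ((C : Polynomial ℚ →+* Polynomial (Polynomial ℚ)).comp (C : ℚ →+* Polynomial ℚ))
    (C X * X ^ m)

lemma phi0_coeff (m : ℕ) (c : Polynomial ℚ) (s u : ℕ) :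
    ((phi0 m c).coeff s).coeff u = if s = m * u then c.coeff u else 0 := by
  have hterm : ∀ k : ℕ, (C X * X ^ m : Polynomial (Polynomial ℚ)) ^ k
      = C (X ^ k) * X ^ (m * k) := by
    intro k
    rw [mul_pow, ← C_pow, ← pow_mul]
  rw [phi0, coe_eval₂RingHom, eval₂_eq_sum, Polynomial.sum, finset_sum_coeff, finset_sum_coeff]
  have h1 : ∀ k ∈ c.support,
      ((((C : Polynomial ℚ →+* Polynomial (Polynomial ℚ)).comp (C : ℚ →+* Polynomial ℚ))
          (c.coeff k) * (C X * X ^ m) ^ k).coeff s).coeff u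
        = if m * k = s then (if k = u then c.coeff k else 0) else 0 := by
    intro k _
    rw [hterm, RingHom.comp_apply, ← mul_assoc, ← C_mul, C_mul_X_pow_eq_monomial,
      coeff_monomial]
    by_cases h : m * k = s
    · simp only [if_pos h, coeff_C_mul, coeff_X_pow]
      by_cases hku : k = u
      · subst hku; simp
      · simp [hku, Ne.symm hku]
    · simp [h]
  rw [Finset.sum_congr rfl h1]
  by_cases hu : u ∈ c.support
  · rw [Finset.sum_eq_single u]
    · simp [eq_comm]
    · intro k _ hk; simp [hk]
    · intro h; exact absurd hu h
  · have hcu : c.coeff u = 0 := Polynomial.notMem_support_iff.mp hu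
    rw [Finset.sum_eq_zero, hcu]
    · simp
    · intro k hk
      have hne : k ≠ u := fun h => hu (h ▸ hk)
      simp [hne]

lemma Phi_coeff (m : ℕ) (P : Polynomial (Polynomial ℚ)) (t u : ℕ) :
    ((eval₂ (phi0 m) X P).coeff t).coeff u
      = if m * u ≤ t then (P.coeff (t - m * u)).coeff u else 0 := by
  rw [eval₂_eq_sum, Polynomial.sum, finset_sum_coeff, finset_sum_coeff]
  have h1 : ∀ j ∈ P.support,
      ((phi0 m (P.coeff j) * X ^ j).coeff t).coeff u
        = if j ≤ t then (if t - j = m * u then (P.coeff j).coeff u else 0) else 0 := by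
    intro j _
    rw [coeff_mul_X_pow']
    by_cases h : j ≤ t
    · rw [if_pos h, if_pos h, phi0_coeff]
    · simp [h]
  rw [Finset.sum_congr rfl h1]
  by_cases hle : m * u ≤ t
  · rw [if_pos hle]
    by_cases hj : t - m * u ∈ P.support
    · rw [Finset.sum_eq_single (t - m * u)]
      · have h2 : t - m * u ≤ t := Nat.sub_le _ _
        rw [if_pos h2, if_pos (by omega)]
      · intro k hk hkne
        by_cases h3 : k ≤ t
        · rw [if_pos h3, if_neg (by omega)]
        · rw [if_neg h3]
      · intro h; exact absurd hj h
    · have hc : P.coeff (t - m * u) = 0 := Polynomial.notMem_support_iff.mp hj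
      rw [hc, Finset.sum_eq_zero]
      · simp
      · intro k hk
        have hkne : k ≠ t - m * u := fun h => hj (h ▸ hk)
        by_cases h3 : k ≤ t
        · rw [if_pos h3, if_neg (by omega)]
        · rw [if_neg h3]
  · rw [if_neg hle, Finset.sum_eq_zero]
    intro k _
    by_cases h3 : k ≤ t
    · rw [if_pos h3, if_neg (by omega)]
    · rw [if_neg h3]

lemma no_monic_divisor (m n : ℕ) (hm : 2 ≤ m) (hn : 2 ≤ n)
    (f : Polynomial (Polynomial ℚ))
    (hfm : f.natDegree = m)
    (hlm : f.leadingCoeff.Monic) (hln : f.leadingCoeff.natDegree = 2 * n)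
    (hcd : ∀ i < m, (f.coeff i).natDegree ≤ 2 * n - 1)
    (h00 : f.coeff 0 ≠ 0)
    (μ : Polynomial (Polynomial ℚ)) (hμ : μ.Monic) (hd : 0 < μ.natDegree) :
    ¬ μ ∣ f := by
  rintro ⟨G, hG⟩
  have hf0 : f ≠ 0 := leadingCoeff_ne_zero.mp hlm.ne_zero
  have hμ0ne : μ ≠ 0 := hμ.ne_zero
  have hG0 : G ≠ 0 := fun h => hf0 (by rw [hG, h, mul_zero])
  have hlG : G.leadingCoeff = f.leadingCoeff := by
    rw [hG, leadingCoeff_mul, hμ.leadingCoeff, one_mul]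
  have hμ0 : μ.coeff 0 ≠ 0 := by
    intro h
    apply h00
    rw [hG, mul_coeff_zero, h, zero_mul]
  set d := μ.natDegree with hdd
  set e := (μ.coeff 0).natDegree with hee
  set E := eval₂RingHom (phi0 m) X with hE
  have hEapp : ∀ Q, E Q = eval₂ (phi0 m) X Q := fun Q => rfl
  -- lower bound for E μ.reverse
  have hμlow : m * e + d ≤ (E μ.reverse).natDegree := by
    apply le_natDegree_of_ne_zero
    intro h
    have := Phi_coeff m μ.reverse (m * e + d) e
    rw [← hEapp, h] at this
    rw [if_pos (Nat.le_add_right _ _), Nat.add_sub_cancel_left, coeff_reverse,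
      revAt_le (le_refl _), Nat.sub_self] at this
    exact leadingCoeff_ne_zero.mpr hμ0 this.symm
  -- lower bound for E G.reverse
  have hGlow : m * (2 * n) ≤ (E G.reverse).natDegree := by
    apply le_natDegree_of_ne_zero
    intro h
    have := Phi_coeff m G.reverse (m * (2 * n)) (2 * n)
    rw [← hEapp, h] at this
    rw [if_pos (le_refl _), Nat.sub_self, coeff_zero_reverse, hlG, ← hln,
      hlm.coeff_natDegree] at this
    simp at this
  -- upper bound for E f.reverse
  have hfup : (E f.reverse).natDegree ≤ m * (2 * n) := by
    rw [natDegree_le_iff_coeff_eq_zero]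
    intro t ht
    ext u
    rw [hEapp, Phi_coeff, coeff_zero]
    by_cases hle : m * u ≤ t
    · rw [if_pos hle]
      set j := t - m * u with hj
      rcases Nat.lt_or_ge m j with hjm | hjm
      · rw [coeff_reverse, hfm, revAt_eq_self_of_lt hjm]
        have hz : f.coeff j = 0 := coeff_eq_zero_of_natDegree_lt (by omega)
        rw [hz]
        exact coeff_zero u
      · -- j ≤ m
        rw [coeff_reverse, hfm, revAt_le hjm]
        rcases Nat.eq_zero_or_pos j with hj0 | hjpos
        · have h2n : 2 * n < u := by
            have h3 : m * (2 * n) < m * u := by omega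
            exact lt_of_mul_lt_mul_left h3 (Nat.zero_le m)
          rw [hj0, Nat.sub_zero, ← hfm, coeff_natDegree]
          have hz : f.leadingCoeff.coeff u = 0 :=
            coeff_eq_zero_of_natDegree_lt (by omega)
          rw [hz]
        · have hlt : m - j < m := by omega
          have hb := hcd (m - j) hlt
          have hu : 2 * n - 1 < u := by
            by_contra hcon
            push_neg at hcon
            have h1 : m * u ≤ m * (2 * n - 1) := Nat.mul_le_mul_left m hcon
            have h2 : m * (2 * n - 1) + m = m * (2 * n) := by
              rw [← Nat.mul_succ]
              congr 1
              omega
            omega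
          have hz : (f.coeff (m - j)).coeff u = 0 :=
            coeff_eq_zero_of_natDegree_lt (by omega)
          rw [hz]
    · rw [if_neg hle]
  -- combine
  have hrev : f.reverse = μ.reverse * G.reverse := by
    rw [hG, reverse_mul_of_domain]
  have hmul : E f.reverse = E μ.reverse * E G.reverse := by rw [hrev, map_mul]
  have hμne : E μ.reverse ≠ 0 := fun h => by
    rw [h, natDegree_zero] at hμlow; omega
  have hGne : E G.reverse ≠ 0 := fun h => by
    rw [h, natDegree_zero] at hGlow
    have : 0 < m * (2 * n) := by positivity
    omega
  have := natDegree_mul hμne hGne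
  rw [← hmul] at this
  rw [this] at hfup
  omega

lemma exists_monic_divisor (f g h : Polynomial (Polynomial ℚ)) (hh : h = f.comp g)
    (P : Polynomial (Polynomial ℚ)) (hPm : P.Monic) (hPirr : Irreducible P) (hPd : P ∣ h) :
    ∃ μ : Polynomial (Polynomial ℚ), μ.Monic ∧ 0 < μ.natDegree ∧ μ ∣ f := by
  set R := Polynomial ℚ
  set K := RatFunc ℚ
  set πK := P.map (algebraMap R K) with hπK
  have hπ : Irreducible πK := hPm.irreducible_iff_irreducible_map_fraction_map.mp hPirr
  haveI : Fact (Irreducible πK) := ⟨hπ⟩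
  set A := AdjoinRoot πK with hA
  set θ : A := AdjoinRoot.root πK with hθ
  have hθP : (Polynomial.aeval θ) P = 0 := by
    rw [← Polynomial.aeval_map_algebraMap K θ P, ← hπK, AdjoinRoot.aeval_eq,
      AdjoinRoot.mk_self]
  have hθint : IsIntegral R θ := ⟨P, hPm, by rw [← Polynomial.aeval_def]; exact hθP⟩
  set γ : A := Polynomial.aeval θ g with hγ
  have hγint : IsIntegral R γ := by
    have hmem : γ ∈ Algebra.adjoin R {θ} := by
      rw [Algebra.adjoin_singleton_eq_range_aeval]
      exact ⟨g, rfl⟩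
    exact IsIntegral.of_mem_of_fg _ hθint.fg_adjoin_singleton _ hmem
  have hγf : (Polynomial.aeval γ) f = 0 := by
    have h1 : Polynomial.aeval θ h = 0 := by
      obtain ⟨W, hW⟩ := hPd
      rw [hW, map_mul, hθP, zero_mul]
    rw [hh, Polynomial.aeval_comp] at h1
    exact h1
  set μ := minpoly R γ with hμ
  have hμm : μ.Monic := minpoly.monic hγint
  have hμd : 0 < μ.natDegree := minpoly.natDegree_pos hγint
  have hdvdK : μ.map (algebraMap R K) ∣ f.map (algebraMap R K) := by
    rw [hμ, ← minpoly.isIntegrallyClosed_eq_field_fractions' K hγint]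
    apply minpoly.dvd
    rw [Polynomial.aeval_map_algebraMap]
    exact hγf
  refine ⟨μ, hμm, hμd, ?_⟩
  have hmod : (f %ₘ μ).map (algebraMap R K) = 0 := by
    rw [Polynomial.map_modByMonic _ hμm]
    exact (Polynomial.modByMonic_eq_zero_iff_dvd (hμm.map _)).mpr hdvdK
  have hzero : f %ₘ μ = 0 := by
    have hinj := Polynomial.map_injective _ (IsFractionRing.injective R K)
    apply hinj
    rw [hmod, Polynomial.map_zero]
  exact (Polynomial.modByMonic_eq_zero_iff_dvd hμm).mp hzero


lemma five_eq_C {R : Type*} [CommRing R] : (5 : R[X]) = C (5 : R) := by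
  rw [show (5:R) = ((5:ℕ):R) by norm_num, C_eq_natCast]
  simp

lemma pent_monic {R : Type*} [CommRing R] [Nontrivial R] (n : ℕ) (hn : 2 ≤ n) :
    ((X:R[X])^n + 5*X + 5).Monic ∧ ((X:R[X])^n + 5*X + 5).natDegree = n := by
  have hrdeg : ((5:R[X]) * X + 5).degree < (n : WithBot ℕ) := by
    have h1 : ((5:R[X]) * X + 5).degree ≤ 1 := by
      refine le_trans (degree_add_le _ _) (max_le ?_ ?_)
      · rw [five_eq_C]; exact degree_C_mul_X_le _
      · rw [five_eq_C]; exact le_trans degree_C_le (by norm_num)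
    refine lt_of_le_of_lt h1 ?_
    exact_mod_cast (by omega : 1 < n)
  constructor
  · rw [add_assoc]; exact monic_X_pow_add hrdeg
  · have hd : ((X:R[X])^n + 5*X + 5).degree = (n : WithBot ℕ) := by
      rw [add_assoc, degree_add_eq_left_of_degree_lt, degree_X_pow]
      rw [degree_X_pow]; exact hrdeg
    exact natDegree_eq_of_degree_eq_some hd

lemma p_irr (n : ℕ) (hn : 2 ≤ n) : Irreducible ((X:ℚ[X])^n + 5*X + 5) := by
  have hqm : ((X:ℤ[X])^n + 5*X + 5).Monic := (pent_monic n hn).1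
  have hqd : ((X:ℤ[X])^n + 5*X + 5).natDegree = n := (pent_monic n hn).2
  have h5 : Prime (5:ℤ) := by rw [Int.prime_iff_natAbs_prime]; norm_num
  have hcoeff : ∀ i : ℕ, ((X:ℤ[X])^n + 5*X + 5).coeff i
      = (if i = n then 1 else 0) + (if i = 1 then 5 else 0) + (if i = 0 then 5 else 0) := by
    intro i
    rw [coeff_add, coeff_add, coeff_X_pow, five_eq_C, coeff_C_mul, coeff_X, coeff_C]
    have h1 : (if (1:ℕ) = i then (1:ℤ) else 0) = (if i = 1 then 1 else 0) := by
      simp [eq_comm]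
    rw [h1, mul_ite, mul_one, mul_zero]
  have hE : ((X:ℤ[X])^n + 5*X + 5).IsEisensteinAt (Ideal.span {(5:ℤ)}) := by
    constructor
    · rw [hqm.leadingCoeff]
      intro hmem
      rw [Ideal.mem_span_singleton] at hmem
      exact h5.not_unit (isUnit_of_dvd_one hmem)
    · intro i hi
      rw [hqd] at hi
      rw [Ideal.mem_span_singleton, hcoeff, if_neg (by omega : ¬ i = n)]
      rcases Nat.lt_or_ge i 2 with h2 | h2
      · interval_cases i <;> simp
      · rw [if_neg (by omega : ¬ i = 1), if_neg (by omega : ¬ i = 0)]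
        simp
    · rw [Ideal.span_singleton_pow, Ideal.mem_span_singleton, hcoeff,
        if_neg (by omega : ¬ 0 = n), if_neg (by omega : ¬ (0:ℕ) = 1), if_pos rfl]
      intro hdvd
      have : (5:ℤ)^2 = 25 := by norm_num
      rw [this] at hdvd
      omega
  have hqirr : Irreducible ((X:ℤ[X])^n + 5*X + 5) := hE.irreducible
    ((Ideal.span_singleton_prime (by norm_num)).mpr h5) hqm.isPrimitive (by omega)
  have hres := (hqm.irreducible_iff_irreducible_map_fraction_map (K := ℚ)).mp hqirr
  have hmap : ((X:ℤ[X])^n + 5*X + 5).map (algebraMap ℤ ℚ) = (X:ℚ[X])^n + 5*X + 5 := by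
    rw [five_eq_C, five_eq_C (R := ℚ), Polynomial.map_add, Polynomial.map_add,
      Polynomial.map_mul, Polynomial.map_pow, Polynomial.map_X, Polynomial.map_C,
      show ((algebraMap ℤ ℚ) 5) = (5:ℚ) by norm_num]
  rwa [hmap] at hres


theorem stmt10 (m n : ℕ) (hm : 2 ≤ m) (hn : 2 ≤ n)
    (a b : ℕ → Polynomial ℚ) (ha0 : a 0 ≠ 0)
    (hdeg : ∀ i ≤ m - 1, (a i).natDegree ≤ 2 * n - 1)
    (f g : Polynomial (Polynomial ℚ))
    (hf : f = (∑ i ∈ Finset.range m, Polynomial.C (a i) * Polynomial.X ^ i)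
        + Polynomial.C (((Polynomial.X : Polynomial ℚ) ^ n + 5 * Polynomial.X + 5) ^ 2)
            * Polynomial.X ^ m)
    (hg : g = (∑ j ∈ Finset.range n, Polynomial.C (b j) * Polynomial.X ^ j)
        + Polynomial.X ^ n) :
    Omega ((Polynomial.aeval g f).map (algebraMap (Polynomial ℚ) (RatFunc ℚ))) ≤ 2 := by
  by_contra hcon
  push_neg at hcon
  have hΩ3 : 3 ≤ Omega ((Polynomial.aeval g f).map (algebraMap (Polynomial ℚ) (RatFunc ℚ))) := hcon
  set p : Polynomial ℚ := X^n + 5*X + 5 with hp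
  have hpm := (pent_monic (R := ℚ) n hn).1
  have hpd := (pent_monic (R := ℚ) n hn).2
  have hp2m : (p^2).Monic := hpm.pow _
  have hp2d : (p^2).natDegree = 2*n := by rw [natDegree_pow, hpd]
  have hp2ne : (p:Polynomial ℚ)^2 ≠ 0 := hp2m.ne_zero
  -- coefficients of f
  have hfc : ∀ i, i < m → f.coeff i = a i := by
    intro i hi
    rw [hf, coeff_add, finset_sum_coeff]
    have hsum : ∑ j ∈ Finset.range m, (C (a j) * X ^ j).coeff i = a i := by
      rw [Finset.sum_eq_single i]
      · rw [coeff_C_mul_X_pow, if_pos rfl]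
      · intro j _ hj
        rw [coeff_C_mul_X_pow, if_neg (Ne.symm hj)]
      · intro hnotin
        exact absurd (Finset.mem_range.mpr hi) hnotin
    rw [hsum, coeff_C_mul_X_pow, if_neg (by omega), add_zero]
  have hfm : f.coeff m = p^2 := by
    rw [hf, coeff_add, finset_sum_coeff, Finset.sum_eq_zero, coeff_C_mul_X_pow,
      if_pos rfl, zero_add]
    intro j hj
    rw [coeff_C_mul_X_pow, if_neg (by have := Finset.mem_range.mp hj; omega)]
  have hfhigh : ∀ j, m < j → f.coeff j = 0 := by
    intro j hjm
    rw [hf, coeff_add, finset_sum_coeff, Finset.sum_eq_zero, coeff_C_mul_X_pow,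
      if_neg (by omega), add_zero]
    intro k hk
    rw [coeff_C_mul_X_pow, if_neg (by have := Finset.mem_range.mp hk; omega)]
  have hfdeg : f.natDegree = m := by
    apply le_antisymm
    · exact natDegree_le_iff_coeff_eq_zero.mpr (fun j hj => hfhigh j hj)
    · exact le_natDegree_of_ne_zero (by rw [hfm]; exact hp2ne)
  have hflead : f.leadingCoeff = p^2 := by rw [leadingCoeff, hfdeg, hfm]
  -- g is monic of degree n
  have hsumdeg : (∑ j ∈ Finset.range n, C (b j) * X ^ j).degree < (n : WithBot ℕ) := by
    refine lt_of_le_of_lt (degree_sum_le _ _) ?_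
    rw [Finset.sup_lt_iff (by exact_mod_cast WithBot.bot_lt_coe n)]
    intro j hj
    refine lt_of_le_of_lt (degree_C_mul_X_pow_le _ _) ?_
    exact_mod_cast Finset.mem_range.mp hj
  have hgdeg : g.natDegree = n := by
    have hd2 : g.degree = (n : WithBot ℕ) := by
      rw [hg, add_comm, degree_add_eq_left_of_degree_lt, degree_X_pow]
      rw [degree_X_pow]; exact hsumdeg
    exact natDegree_eq_of_degree_eq_some hd2
  have hgm : g.Monic := by
    rw [hg, add_comm]; exact monic_X_pow_add hsumdeg
  -- h = f.comp g
  have hcomp : Polynomial.aeval g f = f.comp g := by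
    rw [Polynomial.aeval_def, Polynomial.comp, Polynomial.algebraMap_eq]
  have hleadh : (Polynomial.aeval g f).leadingCoeff = p^2 := by
    rw [hcomp, Polynomial.leadingCoeff_comp (by rw [hgdeg]; omega), hflead,
      hgm.leadingCoeff, one_pow, mul_one]
  have hhne : Polynomial.aeval g f ≠ 0 := by
    intro h0
    rw [h0, leadingCoeff_zero] at hleadh
    exact hp2ne hleadh.symm
  have hpprime : Prime p := (UniqueFactorizationMonoid.irreducible_iff_prime).mp (p_irr n hn)
  obtain ⟨P, hPm, hPirr, hPdvd⟩ :=
    exists_good_factor (Polynomial.aeval g f) p hpprime hhne hleadh hΩ3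
  obtain ⟨μ, hμm, hμd, hμf⟩ :=
    exists_monic_divisor f g (Polynomial.aeval g f) hcomp P hPm hPirr hPdvd
  refine no_monic_divisor m n hm hn f hfdeg (by rw [hflead]; exact hp2m)
    (by rw [hflead]; exact hp2d) (fun i hi => ?_)
    (by rw [hfc 0 (by omega)]; exact ha0) μ hμm hμd hμf
  rw [hfc i hi]
  exact hdeg i (by omega)
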